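/- arXiv:2108.09198 — 2 statements merged into one kernel-verified Lean document; each statement's English description precedes it below -/
import Mathlib

section
/- Let C be an additive right polycyclic code induced by a binary vector a, and suppose α g_1 + g_2 is a nonbinary element of C (under the identification with R_n) with g_1, g_2 binary polynomials of degree less than n and g_1 of minimal degree among all binary h_1 for which α h_1 + h_2 is a nonbinary element of C with h_2 binary. Then g_1 divides x^n − a(x) in F2[x]. -/
open Polynomial

noncomputable section

abbrev F4 : Type := GaloisField 2 2

def IsBin (z : F4) : Prop := z = 0 ∨ z = 1

def IsBinVec {n : ℕ} (a : Fin n → F4) : Prop := ∀ i, IsBin (a i)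

def IsBinPoly (p : Polynomial F4) : Prop := ∀ i, IsBin (p.coeff i)

def polyOfVec {n : ℕ} (c : Fin n → F4) : Polynomial F4 :=
  ∑ i : Fin n, Polynomial.C (c i) * X ^ (i : ℕ)

def rightShift {n : ℕ} (a c : Fin n → F4) : Fin n → F4 := fun i =>
  (if (i : ℕ) = 0 then 0 else c ⟨(i : ℕ) - 1, lt_of_le_of_lt (Nat.sub_le _ _) i.isLt⟩)
    + c ⟨n - 1, Nat.sub_lt i.pos Nat.one_pos⟩ * a i

def leftShift {n : ℕ} (a c : Fin n → F4) : Fin n → F4 := fun i =>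
  (if h : (i : ℕ) + 1 < n then c ⟨(i : ℕ) + 1, h⟩ else 0) + c ⟨0, i.pos⟩ * a i

def seqShift {n : ℕ} (a c : Fin n → F4) : Fin n → F4 := fun i =>
  if h : (i : ℕ) + 1 < n then c ⟨(i : ℕ) + 1, h⟩ else ∑ j, a j * c j

def IsRightPolycyclic {n : ℕ} (a : Fin n → F4) (C : AddSubgroup (Fin n → F4)) : Prop :=
  ∀ c ∈ C, rightShift a c ∈ C

def IsLeftPolycyclic {n : ℕ} (a : Fin n → F4) (C : AddSubgroup (Fin n → F4)) : Prop :=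
  ∀ c ∈ C, leftShift a c ∈ C

def quotMk {n : ℕ} (a : Fin n → F4) :
    Polynomial F4 →+* Polynomial F4 ⧸ Ideal.span {X ^ n - polyOfVec a} :=
  Ideal.Quotient.mk _

def codeImage {n : ℕ} (a : Fin n → F4) (C : AddSubgroup (Fin n → F4)) :
    Set (Polynomial F4 ⧸ Ideal.span {X ^ n - polyOfVec a}) :=
  (fun c => quotMk a (polyOfVec c)) '' (C : Set (Fin n → F4))

def frob : F4 →+* F4 := frobenius F4 2

lemma isBin_iff (z : F4) : IsBin z ↔ frob z = z := by
  constructor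
  · rintro (rfl | rfl) <;> simp [frob, frobenius_def]
  · intro h
    have h2 : z * (z - 1) = 0 := by
      have : z ^ 2 = z := by rw [← frobenius_def 2 z]; exact h
      ring_nf
      linear_combination this
    rcases mul_eq_zero.1 h2 with h | h
    · exact Or.inl h
    · exact Or.inr (by linear_combination h)

lemma isBinPoly_iff (p : Polynomial F4) : IsBinPoly p ↔ p.map frob = p := by
  constructor
  · intro h; ext i; rw [coeff_map]; exact (isBin_iff _).1 (h i)
  · intro h i; rw [isBin_iff]
    conv_rhs => rw [← h]
    rw [coeff_map]

lemma coeff_polyOfVec {n : ℕ} (c : Fin n → F4) (k : ℕ) :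
    (polyOfVec c).coeff k = if h : k < n then c ⟨k, h⟩ else 0 := by
  unfold polyOfVec
  rw [finset_sum_coeff]
  simp only [coeff_C_mul, coeff_X_pow, mul_ite, mul_one, mul_zero]
  split_ifs with h
  · rw [Finset.sum_eq_single (⟨k, h⟩ : Fin n)]
    · simp
    · intro b _ hb
      simp only [ite_eq_right_iff]
      intro hk
      exact absurd (Fin.ext hk.symm) hb
    · simp
  · apply Finset.sum_eq_zero
    intro i _
    simp only [ite_eq_right_iff]
    intro hk
    exact absurd (hk ▸ i.isLt) h

lemma degree_polyOfVec_lt {n : ℕ} (c : Fin n → F4) :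
    (polyOfVec c).degree < (n : WithBot ℕ) := by
  rw [degree_lt_iff_coeff_zero]
  intro m hm
  rw [coeff_polyOfVec]
  rw [dif_neg]
  exact fun h => absurd hm (by exact_mod_cast not_le.2 h)

lemma polyOfVec_add {n : ℕ} (c d : Fin n → F4) :
    polyOfVec (c + d) = polyOfVec c + polyOfVec d := by
  ext k
  simp [coeff_polyOfVec]
  split_ifs <;> simp

lemma shift_eq {n : ℕ} (hn : 0 < n) (a c : Fin n → F4) :
    X * polyOfVec c
      = polyOfVec (rightShift a c)
        + Polynomial.C (c ⟨n - 1, Nat.sub_lt hn Nat.one_pos⟩) * (X ^ n - polyOfVec a) := by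
  ext k
  simp only [coeff_add, coeff_C_mul, coeff_sub, coeff_X_pow, coeff_polyOfVec, rightShift]
  cases k with
  | zero =>
    rw [coeff_X_mul_zero]
    simp only [dif_pos hn, if_pos rfl, if_neg (show ¬ (0:ℕ) = n by omega)]
    simp
  | succ k =>
    rw [coeff_X_mul, coeff_polyOfVec]
    by_cases h1 : k + 1 < n
    · simp only [dif_pos h1, dif_pos (show k < n by omega), if_neg (show ¬ k + 1 = n by omega),
        if_neg (Nat.succ_ne_zero k), Nat.add_sub_cancel]
      ring
    · by_cases h2 : k < n
      · simp only [dif_neg h1, dif_pos h2, if_pos (show k + 1 = n by omega)]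
        have : (⟨n - 1, Nat.sub_lt hn Nat.one_pos⟩ : Fin n) = ⟨k, h2⟩ := by
          apply Fin.ext; simp; omega
        rw [this]
        ring
      · simp only [dif_neg h1, dif_neg h2, if_neg (show ¬ k + 1 = n by omega)]
        ring

section Closure
variable {n : ℕ} {a : Fin n → F4} {C : AddSubgroup (Fin n → F4)}

lemma zero_mem_codeImage : 0 ∈ codeImage a C :=
  ⟨0, C.zero_mem, by simp [polyOfVec]; exact map_zero (quotMk a)⟩

lemma add_mem_codeImage {x y} (hx : x ∈ codeImage a C) (hy : y ∈ codeImage a C) :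
    x + y ∈ codeImage a C := by
  obtain ⟨c, hc, rfl⟩ := hx
  obtain ⟨d, hd, rfl⟩ := hy
  exact ⟨c + d, C.add_mem hc hd, by simp [polyOfVec_add, map_add]⟩

lemma sum_mem_codeImage {ι : Type*} (s : Finset ι)
    (f : ι → Polynomial F4 ⧸ Ideal.span {X ^ n - polyOfVec a})
    (h : ∀ i ∈ s, f i ∈ codeImage a C) : (∑ i ∈ s, f i) ∈ codeImage a C :=
  Finset.sum_induction f (· ∈ codeImage a C)
    (fun _ _ => add_mem_codeImage) zero_mem_codeImage h

lemma mul_X_mem_codeImage (hn : 0 < n) (hC : IsRightPolycyclic a C) {z}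
    (hz : z ∈ codeImage a C) : quotMk a X * z ∈ codeImage a C := by
  obtain ⟨c, hc, rfl⟩ := hz
  refine ⟨rightShift a c, hC c hc, ?_⟩
  show quotMk a (polyOfVec (rightShift a c)) = quotMk a X * quotMk a (polyOfVec c)
  rw [← map_mul, shift_eq hn a c]
  have hM : quotMk a ((X : Polynomial F4) ^ n - polyOfVec a) = 0 :=
    Ideal.Quotient.eq_zero_iff_mem.2 (Ideal.subset_span rfl)
  rw [map_add, map_mul, hM, mul_zero, add_zero]

lemma mul_Xpow_mem_codeImage (hn : 0 < n) (hC : IsRightPolycyclic a C) (k : ℕ) {z}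
    (hz : z ∈ codeImage a C) : quotMk a (X ^ k) * z ∈ codeImage a C := by
  induction k with
  | zero => simpa using hz
  | succ k ih =>
    have : quotMk a (X ^ (k + 1)) * z = quotMk a X * (quotMk a (X ^ k) * z) := by
      rw [pow_succ, map_mul, ← mul_assoc, mul_comm (quotMk a (X ^ k)) (quotMk a X)]
    rw [this]
    exact mul_X_mem_codeImage hn hC ih

lemma mul_bin_mem_codeImage (hn : 0 < n) (hC : IsRightPolycyclic a C)
    (p : Polynomial F4) (hp : IsBinPoly p) {z}
    (hz : z ∈ codeImage a C) : quotMk a p * z ∈ codeImage a C := by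
  have hrw : quotMk a p * z = ∑ i ∈ p.support, quotMk a (monomial i (p.coeff i)) * z := by
    conv_lhs => rw [p.as_sum_support]
    rw [map_sum, Finset.sum_mul]
  rw [hrw]
  apply sum_mem_codeImage
  intro i _
  rcases hp i with h | h
  · rw [h]
    simp [zero_mem_codeImage]
  · rw [h, ← X_pow_eq_monomial]
    exact mul_Xpow_mem_codeImage hn hC i hz
end Closure

lemma isBinPoly_M {n : ℕ} (a : Fin n → F4) (ha : IsBinVec a) :
    IsBinPoly ((X : Polynomial F4) ^ n - polyOfVec a) := by
  rw [isBinPoly_iff]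
  have h1 : (polyOfVec a).map frob = polyOfVec a := by
    ext k
    rw [coeff_map, coeff_polyOfVec]
    split_ifs with h
    · exact (isBin_iff _).1 (ha _)
    · exact map_zero frob
  rw [Polynomial.map_sub, Polynomial.map_pow, map_X, h1]


/-- if `α g1 + g2` is a nonbinary element of the additive right
polycyclic code `C` (induced by the binary vector `a`), with `g1, g2` binary of
degree less than `n` and `g1` of minimal degree among binary parts of nonbinary
elements of `C`, then `g1` divides `x^n - a(x)` in `F2[x]`. -/
theorem stmt_8 (n : ℕ) (hn : 0 < n) (a : Fin n → F4) (ha : IsBinVec a)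
    (C : AddSubgroup (Fin n → F4)) (hC : IsRightPolycyclic a C)
    (α : F4) (hα : α ^ 2 + α + 1 = 0)
    (g1 g2 : Polynomial F4) (hg1bin : IsBinPoly g1) (hg2bin : IsBinPoly g2)
    (hg1deg : g1.degree < (n : WithBot ℕ)) (hg2deg : g2.degree < (n : WithBot ℕ))
    (hg1ne : g1 ≠ 0)
    (hmem : quotMk a (Polynomial.C α * g1 + g2) ∈ codeImage a C)
    (hmin : ∀ h1 h2 : Polynomial F4, IsBinPoly h1 → IsBinPoly h2 → h1 ≠ 0 →
      h1.degree < (n : WithBot ℕ) → h2.degree < (n : WithBot ℕ) →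
      quotMk a (Polynomial.C α * h1 + h2) ∈ codeImage a C → g1.degree ≤ h1.degree) :
    ∃ q : Polynomial F4, IsBinPoly q ∧ X ^ n - polyOfVec a = g1 * q := by
  set M : Polynomial F4 := X ^ n - polyOfVec a with hM
  have hMbin : IsBinPoly M := isBinPoly_M a ha
  have hMmonic : Monic M := monic_X_pow_sub (degree_polyOfVec_lt a)
  have hdegM : M.degree = (n : WithBot ℕ) := by
    rw [hM, degree_sub_eq_left_of_degree_lt, degree_X_pow]
    rw [degree_X_pow]
    exact degree_polyOfVec_lt a
  have hg1monic : Monic g1 := by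
    rcases hg1bin g1.natDegree with h | h
    · exact absurd (leadingCoeff_eq_zero.1 h) hg1ne
    · exact h
  set q : Polynomial F4 := M /ₘ g1 with hq
  set r : Polynomial F4 := M %ₘ g1 with hr
  have hdiv : r + g1 * q = M := modByMonic_add_div M g1
  have hqbin : IsBinPoly q := by
    rw [isBinPoly_iff, hq, map_divByMonic frob hg1monic,
      (isBinPoly_iff _).1 hMbin, (isBinPoly_iff _).1 hg1bin]
  have hrbin : IsBinPoly r := by
    rw [isBinPoly_iff, hr, map_modByMonic frob hg1monic,
      (isBinPoly_iff _).1 hMbin, (isBinPoly_iff _).1 hg1bin]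
  have hrdeg : r.degree < g1.degree := degree_modByMonic_lt M hg1monic
  by_cases hr0 : r = 0
  · refine ⟨q, hqbin, ?_⟩
    rw [← hdiv, hr0, zero_add]
  · exfalso
    set d : Polynomial F4 := (q * g2) /ₘ M with hd
    set h2' : Polynomial F4 := (q * g2) %ₘ M with hh2'
    have hdiv2 : h2' + M * d = q * g2 := modByMonic_add_div (q * g2) M
    have hqg2bin : IsBinPoly (q * g2) := by
      rw [isBinPoly_iff, Polynomial.map_mul, (isBinPoly_iff _).1 hqbin, (isBinPoly_iff _).1 hg2bin]
    have h2'bin : IsBinPoly h2' := by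
      rw [isBinPoly_iff, hh2', map_modByMonic frob hMmonic,
        (isBinPoly_iff _).1 hqg2bin, (isBinPoly_iff _).1 hMbin]
    have h2'deg : h2'.degree < (n : WithBot ℕ) := by
      rw [← hdegM]
      exact degree_modByMonic_lt (q * g2) hMmonic
    have hrdegn : r.degree < (n : WithBot ℕ) := lt_trans hrdeg hg1deg
    have hz : quotMk a (q * (Polynomial.C α * g1 + g2)) ∈ codeImage a C := by
      rw [map_mul]
      exact mul_bin_mem_codeImage hn hC q hqbin hmem
    have h2F : (2 : F4) = 0 := by
      have := CharP.cast_eq_zero F4 2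
      exact_mod_cast this
    have hchar : (2 : Polynomial F4) = 0 := by
      rw [← map_ofNat (Polynomial.C : F4 →+* Polynomial F4) 2, h2F, map_zero]
    have heq : quotMk a (Polynomial.C α * r + h2')
        = quotMk a (q * (Polynomial.C α * g1 + g2)) := by
      refine Ideal.Quotient.eq.2 (Ideal.mem_span_singleton'.2 ⟨-(Polynomial.C α + d), ?_⟩)
      linear_combination (Polynomial.C α) * hdiv - hdiv2 - (Polynomial.C α * r) * hchar
    have := hmin r h2' hrbin h2'bin hr0 hrdegn h2'deg (heq ▸ hz)
    exact absurd hrdeg (not_lt.2 this)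
end
end

section
/- Let C be an additive right polycyclic code induced by a binary vector a which contains no nonzero binary polynomial, and suppose C is generated as an F2[x]-submodule of R_n by a nonbinary element α g_1 + g_2 with g_1, g_2 binary, g_1 of minimal degree among binary parts of nonbinary elements of C, and g_1 dividing x^n − a(x) in F2[x]. Then x^n − a(x) divides ((x^n − a(x))/g_1)·g_2 in F2[x]. -/
open Polynomial

noncomputable section

/-- `C` equals the `F2[x]`-submodule of `R_n` generated by the single element
`α g1 + g2`. -/
def GeneratesCodeOne {n : ℕ} (a : Fin n → F4) (C : AddSubgroup (Fin n → F4)) (α : F4)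
    (g1 g2 : Polynomial F4) : Prop :=
  (∀ c ∈ C, ∃ q1 : Polynomial F4, IsBinPoly q1 ∧
      quotMk a (polyOfVec c) = quotMk a (q1 * (Polynomial.C α * g1 + g2))) ∧
  (∀ q1 : Polynomial F4, IsBinPoly q1 →
      quotMk a (q1 * (Polynomial.C α * g1 + g2)) ∈ codeImage a C)


lemma isBin_iff_s9 (z : F4) : IsBin z ↔ z ∈ Set.range (algebraMap (ZMod 2) F4) := by
  constructor
  · rintro (rfl|rfl)
    · exact ⟨0, map_zero _⟩
    · exact ⟨1, map_one _⟩
  · rintro ⟨y, rfl⟩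
    have : y = 0 ∨ y = 1 := by revert y; decide
    rcases this with rfl|rfl
    · exact Or.inl (map_zero _)
    · exact Or.inr (map_one _)

lemma isBin_sub {z w : F4} (hz : IsBin z) (hw : IsBin w) : IsBin (z - w) := by
  rw [isBin_iff_s9] at *
  obtain ⟨y1, rfl⟩ := hz; obtain ⟨y2, rfl⟩ := hw
  exact ⟨y1 - y2, map_sub _ _ _⟩

lemma isBinPoly_iff_s9 (p : Polynomial F4) :
    IsBinPoly p ↔ ∃ P : Polynomial (ZMod 2), P.map (algebraMap (ZMod 2) F4) = p := by
  rw [← Polynomial.mem_lifts, Polynomial.lifts_iff_coeff_lifts]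
  exact forall_congr' fun i => isBin_iff_s9 _

lemma isBinPoly_polyOfVec {n : ℕ} {a : Fin n → F4} (ha : IsBinVec a) :
    IsBinPoly (polyOfVec a) := by
  intro i
  unfold polyOfVec
  rw [Polynomial.finset_sum_coeff]
  simp only [Polynomial.coeff_C_mul, Polynomial.coeff_X_pow, mul_ite, mul_one, mul_zero]
  by_cases h : i < n
  · rw [Finset.sum_eq_single (⟨i, h⟩ : Fin n)]
    · simp [ha ⟨i, h⟩]
    · intro b _ hb
      simp only [ite_eq_right_iff]
      intro hib
      exact absurd (Fin.ext hib.symm) hb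
    · simp
  · rw [Finset.sum_eq_zero]
    · exact Or.inl rfl
    · intro b _
      rw [if_neg]
      omega

lemma key_facts {n : ℕ} (hn : 0 < n) {a : Fin n → F4} (ha : IsBinVec a) :
    (polyOfVec a).degree < (n : WithBot ℕ) ∧ (X ^ n - polyOfVec a).Monic
      ∧ (X ^ n - polyOfVec a).degree = (n : WithBot ℕ)
      ∧ IsBinPoly (X ^ n - polyOfVec a) := by
  have hdeg : (polyOfVec a).degree ≤ ((n - 1 : ℕ) : WithBot ℕ) := by
    refine (Polynomial.degree_sum_le _ _).trans ?_
    refine Finset.sup_le fun i _ => ?_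
    refine (Polynomial.degree_C_mul_X_pow_le _ _).trans ?_
    exact_mod_cast Nat.le_pred_of_lt i.isLt
  have hlt : (polyOfVec a).degree < (n : WithBot ℕ) :=
    lt_of_le_of_lt hdeg (by exact_mod_cast Nat.pred_lt hn.ne')
  have hmonic : (X ^ n - polyOfVec a).Monic := Polynomial.monic_X_pow_sub hlt
  have hdegX : (X ^ n : Polynomial F4).degree = n := Polynomial.degree_X_pow n
  have hfd : (X ^ n - polyOfVec a).degree = (n : WithBot ℕ) := by
    rw [Polynomial.degree_sub_eq_left_of_degree_lt (by rwa [hdegX]), hdegX]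
  refine ⟨hlt, hmonic, hfd, fun i => ?_⟩
  rw [Polynomial.coeff_sub]
  refine isBin_sub ?_ (isBinPoly_polyOfVec ha i)
  rw [Polynomial.coeff_X_pow]
  by_cases h : i = n <;> simp [h, IsBin]

/-- if the additive right polycyclic code `C` (induced by the
binary vector `a`) contains no nonzero binary polynomial and is generated as an
`F2[x]`-submodule of `R_n` by a nonbinary element `α g1 + g2` with `g1` of
minimal degree among binary parts of nonbinary elements of `C` and
`g1 ∣ x^n - a(x)` in `F2[x]` (say `q · g1 = x^n - a(x)` with `q` binary), then
`x^n - a(x)` divides `((x^n - a(x))/g1) · g2 = q · g2` in `F2[x]`. -/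
theorem stmt_9 (n : ℕ) (hn : 0 < n) (a : Fin n → F4) (ha : IsBinVec a)
    (C : AddSubgroup (Fin n → F4)) (hC : IsRightPolycyclic a C)
    (α : F4) (hα : α ^ 2 + α + 1 = 0)
    (hnobin : ∀ p : Polynomial F4, IsBinPoly p → p.degree < (n : WithBot ℕ) →
      quotMk a p ∈ codeImage a C → p = 0)
    (g1 g2 : Polynomial F4) (hg1bin : IsBinPoly g1) (hg2bin : IsBinPoly g2)
    (hg1deg : g1.degree < (n : WithBot ℕ)) (hg2deg : g2.degree < (n : WithBot ℕ))
    (hg1ne : g1 ≠ 0)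
    (hmem : quotMk a (Polynomial.C α * g1 + g2) ∈ codeImage a C)
    (hmin : ∀ h1 h2 : Polynomial F4, IsBinPoly h1 → IsBinPoly h2 → h1 ≠ 0 →
      h1.degree < (n : WithBot ℕ) → h2.degree < (n : WithBot ℕ) →
      quotMk a (Polynomial.C α * h1 + h2) ∈ codeImage a C → g1.degree ≤ h1.degree)
    (hgen : GeneratesCodeOne a C α g1 g2)
    (q : Polynomial F4) (hqbin : IsBinPoly q) (hq : q * g1 = X ^ n - polyOfVec a) :
    ∃ r : Polynomial F4, IsBinPoly r ∧ q * g2 = (X ^ n - polyOfVec a) * r := by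
  
  obtain ⟨-, hfmonic, hfdeg, hfbin⟩ := key_facts hn ha
  set f : Polynomial F4 := X ^ n - polyOfVec a with hf
  -- q * (α g1 + g2) ≡ q * g2 mod f
  have key : quotMk a (q * (Polynomial.C α * g1 + g2)) = quotMk a (q * g2) := by
    unfold quotMk
    rw [Ideal.Quotient.eq, Ideal.mem_span_singleton]
    exact ⟨Polynomial.C α, by rw [← hf, ← hq]; ring⟩
  have hmem2 : quotMk a (q * g2) ∈ codeImage a C := key ▸ hgen.2 q hqbin
  set p : Polynomial F4 := (q * g2) %ₘ f with hp
  have hpq : quotMk a p = quotMk a (q * g2) := by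
    unfold quotMk
    rw [Ideal.Quotient.eq, Ideal.mem_span_singleton]
    exact ⟨-((q * g2) /ₘ f), by
      rw [hp, ← hf]; linear_combination (Polynomial.modByMonic_add_div (q * g2) f)⟩
  have hpdeg : p.degree < (n : WithBot ℕ) := by
    rw [← hfdeg]
    exact Polynomial.degree_modByMonic_lt _ hfmonic
  -- lift to ZMod 2
  obtain ⟨Q, hQ⟩ := (isBinPoly_iff_s9 q).1 hqbin
  obtain ⟨G2, hG2⟩ := (isBinPoly_iff_s9 g2).1 hg2bin
  obtain ⟨F, hF, -, hFmonic⟩ :=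
    Polynomial.lifts_and_degree_eq_and_monic ((Polynomial.mem_lifts _).2
      ((isBinPoly_iff_s9 f).1 hfbin)) hfmonic
  have hpbin : IsBinPoly p := by
    rw [isBinPoly_iff_s9]
    refine ⟨(Q * G2) %ₘ F, ?_⟩
    rw [Polynomial.map_modByMonic _ hFmonic, Polynomial.map_mul, hQ, hG2, hF]
  have hp0 : p = 0 := hnobin p hpbin hpdeg (hpq ▸ hmem2)
  have hdvd : f ∣ q * g2 := (Polynomial.modByMonic_eq_zero_iff_dvd hfmonic).1 hp0
  have hdvd2 : F ∣ Q * G2 := by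
    rw [← Polynomial.map_dvd_map _ (algebraMap (ZMod 2) F4).injective hFmonic,
      Polynomial.map_mul, hQ, hG2, hF]
    exact hdvd
  obtain ⟨R, hR⟩ := hdvd2
  refine ⟨R.map (algebraMap (ZMod 2) F4), (isBinPoly_iff_s9 _).2 ⟨R, rfl⟩, ?_⟩
  rw [← hQ, ← hG2, ← Polynomial.map_mul, hR, Polynomial.map_mul, hF]
end
end
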